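/- Let ϱ ∈ [−1, 0] and a > 0. Then inf_{u>0, v>0} { (1/2)·I(u,v) + a·ϱ²·u − 2ϱ·√(2a)·(v − 1) } = 0, and the infimum is attained at some point (u_m, v_m) ∈ (0,∞)². -/

import Mathlib

open MeasureTheory ProbabilityTheory Filter Real

open intervalIntegral Topology



lemma aux_exp_diff {x y C : ℝ} (hx : |x| ≤ C) (hy : |y| ≤ C) :
    |Real.exp x - Real.exp y| ≤ Real.exp (3*C) * |x - y| := by
  have hC : 0 ≤ C := le_trans (abs_nonneg x) hx
  have key : ∀ p q : ℝ, |p| ≤ C → |q| ≤ C → q ≤ p →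
      Real.exp p - Real.exp q ≤ Real.exp (3*C) * (p - q) := by
    intro p q hp hq hpq
    have h1 : Real.exp p - Real.exp q = Real.exp q * (Real.exp (p - q) - 1) := by
      rw [mul_sub, ← Real.exp_add]; ring_nf
    have h2 : Real.exp (p - q) - 1 ≤ (p - q) * Real.exp (p - q) := by
      have := Real.add_one_le_exp (-(p-q))
      have hepos := Real.exp_pos (p - q)
      have hprod : Real.exp (-(p-q)) * Real.exp (p-q) = 1 := by
        rw [← Real.exp_add]; simp
      nlinarith
    have hq' : Real.exp q ≤ Real.exp C := Real.exp_le_exp.mpr (le_trans (le_abs_self q) hq)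
    have hpq' : Real.exp (p - q) ≤ Real.exp (2*C) := by
      apply Real.exp_le_exp.mpr
      have := abs_sub_abs_le_abs_sub p q
      have h3 : p - q ≤ |p| + |q| := by
        have := neg_abs_le q
        have := le_abs_self p
        linarith
      linarith
    have hepos := Real.exp_pos (p - q)
    have heq : Real.exp q > 0 := Real.exp_pos q
    calc Real.exp p - Real.exp q ≤ Real.exp q * ((p - q) * Real.exp (p - q)) := by
          rw [h1]; exact mul_le_mul_of_nonneg_left h2 heq.le
      _ ≤ Real.exp C * ((p - q) * Real.exp (2*C)) := by
          apply mul_le_mul hq' (mul_le_mul_of_nonneg_left hpq' (by linarith)) (by nlinarith) (Real.exp_pos C).le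
      _ = (Real.exp C * Real.exp (2*C)) * (p - q) := by ring
      _ = Real.exp (3*C) * (p - q) := by rw [← Real.exp_add]; ring_nf
  rcases le_total y x with h | h
  · rw [abs_of_nonneg (sub_nonneg.mpr (Real.exp_le_exp.mpr h)), abs_of_nonneg (sub_nonneg.mpr h)]
    exact key x y hx hy h
  · rw [abs_of_nonpos (sub_nonpos.mpr (Real.exp_le_exp.mpr h)), abs_of_nonpos (sub_nonpos.mpr h)]
    have := key y x hy hx h
    linarith

lemma aux_primitive_bound {g : ℝ → ℝ} (hg : IntervalIntegrable g volume 0 1) {z : ℝ}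
    (h0 : 0 ≤ z) (h1 : z ≤ 1) :
    |∫ t in (0:ℝ)..z, g t| ≤ ∫ t in (0:ℝ)..(1:ℝ), |g t| := by
  have hsub : IntervalIntegrable g volume 0 z :=
    hg.mono_set (by rw [Set.uIcc_subset_uIcc_iff_le] <;> simp [h0, h1] <;> constructor <;> simp [h0, h1])
  have habs : IntervalIntegrable (fun t => |g t|) volume 0 1 := hg.abs
  have habs1 : IntervalIntegrable (fun t => |g t|) volume 0 z :=
    habs.mono_set (by rw [Set.uIcc_subset_uIcc_iff_le] <;> simp [h0, h1] <;> constructor <;> simp [h0, h1])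
  have habs2 : IntervalIntegrable (fun t => |g t|) volume z 1 :=
    habs.mono_set (by rw [Set.uIcc_subset_uIcc_iff_le] <;> simp [h0, h1] <;> constructor <;> simp [h0, h1])
  calc |∫ t in (0:ℝ)..z, g t| ≤ ∫ t in (0:ℝ)..z, |g t| :=
        intervalIntegral.abs_integral_le_integral_abs h0
    _ ≤ ∫ t in (0:ℝ)..(1:ℝ), |g t| := by
        rw [← intervalIntegral.integral_add_adjacent_intervals habs1 habs2]
        have : 0 ≤ ∫ t in z..(1:ℝ), |g t| :=
          intervalIntegral.integral_nonneg h1 (fun u _ => abs_nonneg _)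
        linarith


lemma aux_hasDerivAt_primitive {h : ℝ → ℝ} (hh : Continuous h) (z : ℝ) :
    HasDerivAt (fun y => ∫ t in (0:ℝ)..y, h t) (h z) z :=
  intervalIntegral.integral_hasDerivAt_right (hh.intervalIntegrable 0 z)
    (hh.stronglyMeasurableAtFilter _ _) hh.continuousAt

lemma aux_cont_E {h : ℝ → ℝ} (hh : Continuous h) :
    ∫ z in (0:ℝ)..(1:ℝ), h z * Real.exp (∫ t in (0:ℝ)..z, h t)
      = Real.exp (∫ t in (0:ℝ)..(1:ℝ), h t) - 1 := by
  set H : ℝ → ℝ := fun y => ∫ t in (0:ℝ)..y, h t with hH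
  have hder : ∀ z ∈ Set.uIcc (0:ℝ) 1, HasDerivAt (fun y => Real.exp (H y))
      (h z * Real.exp (H z)) z := by
    intro z _
    have := (aux_hasDerivAt_primitive hh z).exp
    simpa [mul_comm] using this
  have hHcont : Continuous H := by
    apply continuous_iff_continuousAt.mpr
    intro z
    exact (aux_hasDerivAt_primitive hh z).continuousAt
  have hint : IntervalIntegrable (fun z => h z * Real.exp (H z)) volume 0 1 :=
    (hh.mul (Real.continuous_exp.comp hHcont)).intervalIntegrable 0 1
  have := intervalIntegral.integral_eq_sub_of_hasDerivAt hder hint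
  rw [this]
  simp [hH, intervalIntegral.integral_same]

lemma aux_E {g : ℝ → ℝ} (hg : IntervalIntegrable g volume 0 1) :
    ∫ z in (0:ℝ)..(1:ℝ), g z * Real.exp (∫ t in (0:ℝ)..z, g t)
      = Real.exp (∫ t in (0:ℝ)..(1:ℝ), g t) - 1 := by
  set F : ℝ → ℝ := fun y => ∫ t in (0:ℝ)..y, g t with hF
  set L : ℝ := ∫ z in (0:ℝ)..(1:ℝ), g z * Real.exp (F z) with hL
  set R : ℝ := Real.exp (F 1) - 1 with hR
  set M : ℝ := ∫ t in (0:ℝ)..(1:ℝ), |g t| with hM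
  have hM0 : 0 ≤ M := intervalIntegral.integral_nonneg zero_le_one (fun t _ => abs_nonneg _)
  set C : ℝ := M + 1 with hC
  have hC0 : (0:ℝ) ≤ C := by linarith
  set K : ℝ := Real.exp (3*C) * (2 + M) with hK
  have hK0 : 0 < K := by positivity
  have key : ∀ ε : ℝ, 0 < ε → |L - R| ≤ ε := by
    intro ε hε
    set δ : ℝ := min 1 (ε / (K+1)) with hδ
    have hδpos : 0 < δ := lt_min one_pos (by positivity)
    -- approximation by continuous function
    have hGon : IntegrableOn g (Set.Ioc (0:ℝ) 1) volume := hg.1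
    have hGint : Integrable ((Set.Ioc (0:ℝ) 1).indicator g) volume :=
      hGon.integrable_indicator measurableSet_Ioc
    obtain ⟨h, -, hhle, hhcont, hhint⟩ :=
      hGint.exists_hasCompactSupport_integral_sub_le hδpos
    set H : ℝ → ℝ := fun y => ∫ t in (0:ℝ)..y, h t with hH
    have hhiv : IntervalIntegrable h volume 0 1 := hhcont.intervalIntegrable 0 1
    have hgh : IntervalIntegrable (fun z => g z - h z) volume 0 1 := hg.sub hhiv
    set d : ℝ := ∫ z in (0:ℝ)..(1:ℝ), |g z - h z| with hd
    have hd0 : 0 ≤ d := intervalIntegral.integral_nonneg zero_le_one (fun t _ => abs_nonneg _)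
    have hdδ : d ≤ δ := by
      have h1 : d = ∫ z in Set.Ioc (0:ℝ) 1, |g z - h z| := by
        rw [hd, intervalIntegral.integral_of_le zero_le_one]
      have h2 : (∫ z in Set.Ioc (0:ℝ) 1, |g z - h z|)
          = ∫ z in Set.Ioc (0:ℝ) 1, ‖(Set.Ioc (0:ℝ) 1).indicator g z - h z‖ := by
        apply setIntegral_congr_fun measurableSet_Ioc
        intro x hx
        simp [Set.indicator_of_mem hx, Real.norm_eq_abs]
      have h3 : (∫ z in Set.Ioc (0:ℝ) 1, ‖(Set.Ioc (0:ℝ) 1).indicator g z - h z‖)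
          ≤ ∫ z, ‖(Set.Ioc (0:ℝ) 1).indicator g z - h z‖ := by
        apply setIntegral_le_integral ((hGint.sub hhint).norm)
        filter_upwards with x using norm_nonneg _
      rw [h1, h2]
      exact h3.trans hhle
    have hd1 : d ≤ 1 := hdδ.trans (min_le_left _ _)
    -- bounds on primitives
    have hFHb : ∀ z ∈ Set.Icc (0:ℝ) 1, |F z - H z| ≤ d := by
      intro z hz
      have hgz : IntervalIntegrable g volume 0 z :=
        hg.mono_set (by rw [Set.uIcc_subset_uIcc_iff_le]; simp [hz.1, hz.2])
      have hhz : IntervalIntegrable h volume 0 z := hhcont.intervalIntegrable 0 z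
      have : F z - H z = ∫ t in (0:ℝ)..z, (g t - h t) := by
        rw [intervalIntegral.integral_sub hgz hhz]
      rw [this]
      exact aux_primitive_bound hgh hz.1 hz.2
    have hFb : ∀ z ∈ Set.Icc (0:ℝ) 1, |F z| ≤ M := fun z hz =>
      aux_primitive_bound hg hz.1 hz.2
    have hHb : ∀ z ∈ Set.Icc (0:ℝ) 1, |H z| ≤ C := by
      intro z hz
      have := abs_sub_abs_le_abs_sub (H z) (F z)
      have h1 := hFHb z hz
      have h2 := hFb z hz
      rw [abs_sub_comm] at h1
      linarith
    have hexpFH : ∀ z ∈ Set.Icc (0:ℝ) 1,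
        |Real.exp (F z) - Real.exp (H z)| ≤ Real.exp (3*C) * d := by
      intro z hz
      have h1 : |F z| ≤ C := (hFb z hz).trans (by linarith)
      have := aux_exp_diff h1 (hHb z hz)
      have h2 : Real.exp (3*C) * |F z - H z| ≤ Real.exp (3*C) * d :=
        mul_le_mul_of_nonneg_left (hFHb z hz) (Real.exp_pos _).le
      linarith
    -- continuity of primitives
    have hFcont : ContinuousOn F (Set.uIcc (0:ℝ) 1) :=
      intervalIntegral.continuousOn_primitive_interval' hg Set.left_mem_uIcc
    have hHcont : Continuous H := by
      apply continuous_iff_continuousAt.mpr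
      intro z
      exact (intervalIntegral.integral_hasDerivAt_right (hhcont.intervalIntegrable 0 z)
        (hhcont.stronglyMeasurableAtFilter _ _) hhcont.continuousAt).continuousAt
    have hint1 : IntervalIntegrable (fun z => g z * Real.exp (F z)) volume 0 1 :=
      hg.mul_continuousOn (Real.continuous_exp.comp_continuousOn hFcont)
    have hint2 : IntervalIntegrable (fun z => h z * Real.exp (H z)) volume 0 1 :=
      (hhcont.mul (Real.continuous_exp.comp hHcont)).intervalIntegrable 0 1
    -- estimate B
    have hbound_int : IntervalIntegrable
        (fun z => Real.exp (3*C) * (|g z - h z| + |g z| * d)) volume 0 1 :=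
      (hgh.abs.add (hg.abs.mul_const d)).const_mul _
    have hB : |L - ∫ z in (0:ℝ)..(1:ℝ), h z * Real.exp (H z)|
        ≤ Real.exp (3*C) * (d + M * d) := by
      have hsub : L - (∫ z in (0:ℝ)..(1:ℝ), h z * Real.exp (H z))
          = ∫ z in (0:ℝ)..(1:ℝ), (g z * Real.exp (F z) - h z * Real.exp (H z)) := by
        rw [hL, intervalIntegral.integral_sub hint1 hint2]
      rw [hsub]
      have habs : |∫ z in (0:ℝ)..(1:ℝ), (g z * Real.exp (F z) - h z * Real.exp (H z))|
          ≤ ∫ z in (0:ℝ)..(1:ℝ), |g z * Real.exp (F z) - h z * Real.exp (H z)| :=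
        intervalIntegral.abs_integral_le_integral_abs zero_le_one
      have hmono : (∫ z in (0:ℝ)..(1:ℝ), |g z * Real.exp (F z) - h z * Real.exp (H z)|)
          ≤ ∫ z in (0:ℝ)..(1:ℝ), Real.exp (3*C) * (|g z - h z| + |g z| * d) := by
        apply intervalIntegral.integral_mono_on zero_le_one ((hint1.sub hint2).abs) hbound_int
        intro z hz
        have hEH : Real.exp (H z) ≤ Real.exp C :=
          Real.exp_le_exp.mpr ((le_abs_self _).trans (hHb z hz))
        have hEFH := hexpFH z hz
        have expand : g z * Real.exp (F z) - h z * Real.exp (H z)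
            = (g z - h z) * Real.exp (H z) + g z * (Real.exp (F z) - Real.exp (H z)) := by ring
        calc |g z * Real.exp (F z) - h z * Real.exp (H z)|
            ≤ |g z - h z| * Real.exp (H z) + |g z| * |Real.exp (F z) - Real.exp (H z)| := by
              rw [expand]
              refine (abs_add_le _ _).trans ?_
              rw [abs_mul, abs_mul, abs_of_nonneg (Real.exp_pos _).le]
          _ ≤ |g z - h z| * Real.exp (3*C) + |g z| * (Real.exp (3*C) * d) := by
              have e1 : Real.exp C ≤ Real.exp (3*C) := Real.exp_le_exp.mpr (by linarith)
              have := mul_le_mul_of_nonneg_left hEFH (abs_nonneg (g z))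
              have := mul_le_mul_of_nonneg_left (hEH.trans e1) (abs_nonneg (g z - h z))
              nlinarith [abs_nonneg (g z), abs_nonneg (g z - h z)]
          _ = Real.exp (3*C) * (|g z - h z| + |g z| * d) := by ring
      have hcomp : (∫ z in (0:ℝ)..(1:ℝ), Real.exp (3*C) * (|g z - h z| + |g z| * d))
          = Real.exp (3*C) * (d + M * d) := by
        rw [intervalIntegral.integral_const_mul,
          intervalIntegral.integral_add hgh.abs (hg.abs.mul_const d),
          intervalIntegral.integral_mul_const]
      rw [← hcomp]
      exact habs.trans hmono
    -- estimate A
    have hA : |Real.exp (H 1) - Real.exp (F 1)| ≤ Real.exp (3*C) * d := by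
      rw [abs_sub_comm]
      exact hexpFH 1 (by norm_num)
    have heqh : (∫ z in (0:ℝ)..(1:ℝ), h z * Real.exp (H z)) = Real.exp (H 1) - 1 :=
      aux_cont_E hhcont
    have hdec : L - R = (L - ∫ z in (0:ℝ)..(1:ℝ), h z * Real.exp (H z))
        + (Real.exp (H 1) - Real.exp (F 1)) := by
      rw [heqh, hR]; ring
    have htot : |L - R| ≤ K * d := by
      rw [hdec]
      refine (abs_add_le _ _).trans ?_
      have := hB
      have := hA
      rw [hK]
      nlinarith [Real.exp_pos (3*C)]
    have hfin : K * d ≤ ε := by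
      have h1 : K * d ≤ K * δ := mul_le_mul_of_nonneg_left hdδ hK0.le
      have h2 : δ ≤ ε / (K+1) := min_le_right _ _
      have h3 : K * δ ≤ K * (ε / (K+1)) := mul_le_mul_of_nonneg_left h2 hK0.le
      have h4 : K * (ε / (K+1)) ≤ ε := by
        rw [div_eq_inv_mul]
        rw [mul_comm]
        rw [mul_assoc]
        have hK1 : (0:ℝ) < K + 1 := by linarith
        rw [inv_mul_le_iff₀ hK1]  -- maybe wrong name
        nlinarith
      linarith
    linarith
  have h0 : |L - R| ≤ 0 := by
    by_contra hcon
    push_neg at hcon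
    have := key (|L - R| / 2) (by linarith)
    linarith
  exact sub_eq_zero.mp (abs_nonpos_iff.mp h0)

lemma aux_LB (c : ℝ) {g : ℝ → ℝ} (hg : IntervalIntegrable g volume 0 1)
    (hg2 : IntervalIntegrable (fun z => (g z)^2) volume 0 1) :
    4*c*(Real.exp (∫ t in (0:ℝ)..(1:ℝ), g t) - 1)
      ≤ 2*(∫ z in (0:ℝ)..(1:ℝ), (g z)^2)
        + 2*c^2*(∫ z in (0:ℝ)..(1:ℝ), Real.exp (2 * ∫ t in (0:ℝ)..z, g t)) := by
  have hFcont : ContinuousOn (fun y => ∫ t in (0:ℝ)..y, g t) (Set.uIcc (0:ℝ) 1) :=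
    intervalIntegral.continuousOn_primitive_interval' hg Set.left_mem_uIcc
  have hEFcont : ContinuousOn (fun z => Real.exp (∫ t in (0:ℝ)..z, g t)) (Set.uIcc (0:ℝ) 1) :=
    Real.continuous_exp.comp_continuousOn hFcont
  have hgEF : IntervalIntegrable (fun z => g z * Real.exp (∫ t in (0:ℝ)..z, g t)) volume 0 1 :=
    hg.mul_continuousOn hEFcont
  have hE2F : IntervalIntegrable (fun z => Real.exp (2 * ∫ t in (0:ℝ)..z, g t)) volume 0 1 :=
    (Real.continuous_exp.comp_continuousOn (continuousOn_const.mul hFcont)).intervalIntegrable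
  have hsq : 0 ≤ ∫ z in (0:ℝ)..(1:ℝ),
      (2*(g z)^2 - 4*c*(g z * Real.exp (∫ t in (0:ℝ)..z, g t))
        + 2*c^2 * Real.exp (2 * ∫ t in (0:ℝ)..z, g t)) := by
    have hpt : ∀ z, 0 ≤ 2*(g z)^2 - 4*c*(g z * Real.exp (∫ t in (0:ℝ)..z, g t))
        + 2*c^2 * Real.exp (2 * ∫ t in (0:ℝ)..z, g t) := by
      intro z
      have h2 : Real.exp (2 * ∫ t in (0:ℝ)..z, g t)
          = Real.exp (∫ t in (0:ℝ)..z, g t) * Real.exp (∫ t in (0:ℝ)..z, g t) := by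
        rw [two_mul, Real.exp_add]
      rw [h2]
      nlinarith [sq_nonneg (g z - c * Real.exp (∫ t in (0:ℝ)..z, g t))]
    exact intervalIntegral.integral_nonneg zero_le_one (fun z _ => hpt z)
  have hlin : (∫ z in (0:ℝ)..(1:ℝ),
      (2*(g z)^2 - 4*c*(g z * Real.exp (∫ t in (0:ℝ)..z, g t))
        + 2*c^2 * Real.exp (2 * ∫ t in (0:ℝ)..z, g t)))
      = 2*(∫ z in (0:ℝ)..(1:ℝ), (g z)^2)
        - 4*c*(∫ z in (0:ℝ)..(1:ℝ), g z * Real.exp (∫ t in (0:ℝ)..z, g t))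
        + 2*c^2*(∫ z in (0:ℝ)..(1:ℝ), Real.exp (2 * ∫ t in (0:ℝ)..z, g t)) := by
    rw [intervalIntegral.integral_add ((hg2.const_mul 2).sub (hgEF.const_mul (4*c)))
        (hE2F.const_mul (2*c^2)),
      intervalIntegral.integral_sub (hg2.const_mul 2) (hgEF.const_mul (4*c)),
      intervalIntegral.integral_const_mul, intervalIntegral.integral_const_mul,
      intervalIntegral.integral_const_mul]
  rw [hlin, aux_E hg] at hsq
  linarith

lemma aux_NE (u v : ℝ) (hu : 0 < u) (hv : 0 < v) :
    ∃ g : ℝ → ℝ,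
      IntervalIntegrable g volume 0 1 ∧
      IntervalIntegrable (fun z => (g z)^2) volume 0 1 ∧
      (∫ z in (0:ℝ)..(1:ℝ), Real.exp (2 * ∫ t in (0:ℝ)..z, g t)) = u ∧
      Real.exp (∫ t in (0:ℝ)..(1:ℝ), g t) = v := by
  set b : ℝ := Real.log v with hb
  -- primitive formula
  have hprim : ∀ (θ z : ℝ), (∫ t in (0:ℝ)..z, (b + θ*(1 - 2*t))) = b*z + θ*(z - z^2) := by
    intro θ z
    have hder : ∀ t ∈ Set.uIcc (0:ℝ) z,
        HasDerivAt (fun t => b*t + θ*(t - t^2)) (b + θ*(1 - 2*t)) t := by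
      intro t _
      have h1 : HasDerivAt (fun t : ℝ => t ^ 2) (2 * t) t := by
        simpa using hasDerivAt_pow 2 t
      have h2 : HasDerivAt (fun t : ℝ => t - t^2) (1 - 2*t) t :=
        (hasDerivAt_id t).sub h1
      have h3 := ((hasDerivAt_id t).const_mul b).add (h2.const_mul θ)
      exact h3.congr_deriv (by ring)
    have hcont : Continuous (fun t : ℝ => b + θ*(1 - 2*t)) := by fun_prop
    have := intervalIntegral.integral_eq_sub_of_hasDerivAt hder (hcont.intervalIntegrable 0 z)
    rw [this]; ring
  set U : ℝ → ℝ := fun θ => ∫ z in (0:ℝ)..(1:ℝ), Real.exp (2*(b*z + θ*(z - z^2))) with hU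
  have hcontint : ∀ θ : ℝ, Continuous (fun z => Real.exp (2*(b*z + θ*(z - z^2)))) := by
    intro θ; fun_prop
  -- continuity of U
  have hUcont : Continuous U := by
    apply continuous_iff_continuousAt.mpr
    intro θ₀
    apply intervalIntegral.continuousAt_of_dominated_interval
      (bound := fun _ => Real.exp (2*|b| + 2*(|θ₀|+1)))
    · filter_upwards with θ using ((hcontint θ).aestronglyMeasurable)
    · filter_upwards [Metric.ball_mem_nhds θ₀ one_pos] with θ hθ
      filter_upwards with z hz
      rw [Set.uIoc_of_le zero_le_one] at hz
      have hz0 : 0 < z := hz.1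
      have hz1 : z ≤ 1 := hz.2
      have hzz : 0 ≤ z - z^2 := by nlinarith
      have hzz1 : z - z^2 ≤ 1 := by nlinarith
      have hθb : |θ| ≤ |θ₀| + 1 := by
        have := abs_sub_abs_le_abs_sub θ θ₀
        have : |θ - θ₀| < 1 := by simpa [Real.dist_eq] using hθ
        have := abs_sub_abs_le_abs_sub θ θ₀
        linarith
      rw [Real.norm_eq_abs, abs_of_pos (Real.exp_pos _)]
      apply Real.exp_le_exp.mpr
      have h1 : b*z ≤ |b| := by
        calc b*z ≤ |b*z| := le_abs_self _
          _ = |b| * |z| := abs_mul _ _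
          _ ≤ |b| * 1 := by
              apply mul_le_mul_of_nonneg_left _ (abs_nonneg b)
              rw [abs_of_pos hz0]; exact hz1
          _ = |b| := mul_one _
      have h2 : θ*(z - z^2) ≤ |θ₀|+1 := by
        calc θ*(z - z^2) ≤ |θ*(z-z^2)| := le_abs_self _
          _ = |θ| * |z-z^2| := abs_mul _ _
          _ ≤ (|θ₀|+1) * 1 := by
              apply mul_le_mul hθb (by rw [abs_of_nonneg hzz]; exact hzz1) (abs_nonneg _)
                (by positivity)
          _ = |θ₀|+1 := mul_one _
      linarith
    · exact intervalIntegrable_const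
    · filter_upwards with z _
      fun_prop
  -- tendsto 0 at -infty
  have hUbot : Tendsto U atBot (𝓝 0) := by
    have h0 : (0:ℝ) = ∫ z in (0:ℝ)..(1:ℝ), (0:ℝ) := by simp
    rw [h0]
    apply intervalIntegral.tendsto_integral_filter_of_dominated_convergence
      (bound := fun _ => Real.exp (2*|b|))
    · filter_upwards with θ using ((hcontint θ).aestronglyMeasurable)
    · filter_upwards [eventually_le_atBot (0:ℝ)] with θ hθ
      filter_upwards with z hz
      rw [Set.uIoc_of_le zero_le_one] at hz
      have hz0 : 0 < z := hz.1
      have hz1 : z ≤ 1 := hz.2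
      have hzz : 0 ≤ z - z^2 := by nlinarith
      rw [Real.norm_eq_abs, abs_of_pos (Real.exp_pos _)]
      apply Real.exp_le_exp.mpr
      have h1 : b*z ≤ |b| := by
        calc b*z ≤ |b*z| := le_abs_self _
          _ = |b| * |z| := abs_mul _ _
          _ ≤ |b| * 1 := by
              apply mul_le_mul_of_nonneg_left _ (abs_nonneg b)
              rw [abs_of_pos hz0]; exact hz1
          _ = |b| := mul_one _
      nlinarith
    · exact intervalIntegrable_const
    · have hae : ∀ᵐ (t : ℝ), t ≠ (1:ℝ) := by
        rw [ae_iff]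
        have : {t : ℝ | ¬ t ≠ 1} = {1} := by ext t; simp
        rw [this]
        exact measure_singleton 1
      filter_upwards [hae] with z hz hzI
      rw [Set.uIoc_of_le zero_le_one] at hzI
      have hz0 : 0 < z := hzI.1
      have hz1 : z < 1 := lt_of_le_of_ne hzI.2 hz
      have hzz : 0 < z - z^2 := by nlinarith
      have h1 : Tendsto (fun θ : ℝ => (2*(z - z^2)) * θ) atBot atBot :=
        Filter.Tendsto.const_mul_atBot (by positivity) tendsto_id
      have h2 : Tendsto (fun θ : ℝ => 2*b*z + (2*(z - z^2))*θ) atBot atBot :=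
        tendsto_atBot_add_const_left _ _ h1
      have h3 := Real.tendsto_exp_atBot.comp h2
      have heq : (fun θ : ℝ => Real.exp (2*(b*z + θ*(z - z^2))))
          = fun θ : ℝ => Real.exp (2*b*z + (2*(z - z^2))*θ) := by
        funext θ; ring_nf
      rw [heq]
      exact h3
  -- a value below u
  obtain ⟨θ₁, hθ₁⟩ : ∃ θ₁, U θ₁ < u := (hUbot.eventually_lt_const hu).exists
  -- a value above u
  obtain ⟨θ₂, hθ₂⟩ : ∃ θ₂, u ≤ U θ₂ := by
    set θ₂ : ℝ := max 0 ((8/3)*(Real.log (4*u) + 2*|b|)) with hθ₂def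
    have hθ₂0 : 0 ≤ θ₂ := le_max_left _ _
    have hθ₂1 : (8/3)*(Real.log (4*u) + 2*|b|) ≤ θ₂ := le_max_right _ _
    refine ⟨θ₂, ?_⟩
    set K : ℝ := Real.exp (-(2*|b|) + (3/8)*θ₂) with hK
    have int1 : IntervalIntegrable (fun z => Real.exp (2*(b*z + θ₂*(z - z^2)))) volume 0 (1/4) :=
      (hcontint θ₂).intervalIntegrable _ _
    have int2 : IntervalIntegrable (fun z => Real.exp (2*(b*z + θ₂*(z - z^2)))) volume (1/4) (1/2) :=
      (hcontint θ₂).intervalIntegrable _ _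
    have int3 : IntervalIntegrable (fun z => Real.exp (2*(b*z + θ₂*(z - z^2)))) volume (1/2) 1 :=
      (hcontint θ₂).intervalIntegrable _ _
    have hsplit : U θ₂ = (∫ z in (0:ℝ)..(1/4:ℝ), Real.exp (2*(b*z + θ₂*(z - z^2))))
        + (∫ z in (1/4:ℝ)..(1/2:ℝ), Real.exp (2*(b*z + θ₂*(z - z^2))))
        + (∫ z in (1/2:ℝ)..(1:ℝ), Real.exp (2*(b*z + θ₂*(z - z^2)))) := by
      rw [hU]
      rw [intervalIntegral.integral_add_adjacent_intervals int1 int2,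
        intervalIntegral.integral_add_adjacent_intervals (int1.trans int2) int3]
    have hp1 : 0 ≤ ∫ z in (0:ℝ)..(1/4:ℝ), Real.exp (2*(b*z + θ₂*(z - z^2))) :=
      intervalIntegral.integral_nonneg (by norm_num) (fun z _ => (Real.exp_pos _).le)
    have hp3 : 0 ≤ ∫ z in (1/2:ℝ)..(1:ℝ), Real.exp (2*(b*z + θ₂*(z - z^2))) :=
      intervalIntegral.integral_nonneg (by norm_num) (fun z _ => (Real.exp_pos _).le)
    have hmid : (1/4:ℝ) * K ≤ ∫ z in (1/4:ℝ)..(1/2:ℝ), Real.exp (2*(b*z + θ₂*(z - z^2))) := by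
      have hconst : (∫ _ in (1/4:ℝ)..(1/2:ℝ), K) = (1/4:ℝ) * K := by
        rw [intervalIntegral.integral_const, smul_eq_mul]
        norm_num
      rw [← hconst]
      apply intervalIntegral.integral_mono_on (by norm_num) intervalIntegrable_const int2
      intro z hz
      rw [hK]
      apply Real.exp_le_exp.mpr
      obtain ⟨hz1, hz2⟩ := hz
      have hb1 : -|b| ≤ b*z := by
        have : |b*z| ≤ |b| := by
          rw [abs_mul]
          calc |b| * |z| ≤ |b| * 1 := by
                apply mul_le_mul_of_nonneg_left _ (abs_nonneg b)
                rw [abs_of_nonneg (by linarith : (0:ℝ) ≤ z)]; linarith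
            _ = |b| := mul_one _
        have := neg_abs_le (b*z)
        linarith
      have hz3 : (3/16:ℝ) ≤ z - z^2 := by nlinarith
      have : (3/16)*θ₂ ≤ θ₂*(z - z^2) := by nlinarith
      linarith
    have hKu : u ≤ (1/4:ℝ)*K := by
      have h1 : Real.log (4*u) + 2*|b| ≤ (3/8)*θ₂ := by linarith
      have h2 : Real.log (4*u) ≤ -(2*|b|) + (3/8)*θ₂ := by linarith
      have h3 : Real.exp (Real.log (4*u)) ≤ K := Real.exp_le_exp.mpr h2
      rw [Real.exp_log (by linarith : (0:ℝ) < 4*u)] at h3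
      linarith
    linarith
  -- intermediate value
  obtain ⟨θ, -, hθ⟩ : ∃ θ, θ ∈ Set.uIcc θ₁ θ₂ ∧ U θ = u := by
    have hsub := intermediate_value_uIcc (a := θ₁) (b := θ₂) hUcont.continuousOn
    have hmem : u ∈ Set.uIcc (U θ₁) (U θ₂) := Set.Icc_subset_uIcc ⟨hθ₁.le, hθ₂⟩
    obtain ⟨θ, hθmem, hθeq⟩ := hsub hmem
    exact ⟨θ, hθmem, hθeq⟩
  refine ⟨fun z => b + θ*(1 - 2*z),
    Continuous.intervalIntegrable (by fun_prop) 0 1,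
    Continuous.intervalIntegrable (by fun_prop) 0 1, ?_, ?_⟩
  · simp only [hprim θ]
    exact hθ
  · rw [hprim θ 1]
    norm_num
    exact Real.exp_log hv

lemma aux_min {c : ℝ} (hc : c ≤ 0) :
    IntervalIntegrable (fun t => c / (1 - c*t)) volume 0 1 ∧
    IntervalIntegrable (fun t => (c / (1 - c*t))^2) volume 0 1 ∧
    (∫ z in (0:ℝ)..(1:ℝ), Real.exp (2 * ∫ t in (0:ℝ)..z, c / (1 - c*t))) = (1 - c)⁻¹ ∧
    Real.exp (∫ t in (0:ℝ)..(1:ℝ), c / (1 - c*t)) = (1 - c)⁻¹ ∧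
    (∫ z in (0:ℝ)..(1:ℝ), (c / (1 - c*z))^2) = c^2 * (1 - c)⁻¹ := by
  have hpos : ∀ t : ℝ, 0 ≤ t → (0:ℝ) < 1 - c*t := by
    intro t ht; nlinarith
  have hcontg : ContinuousOn (fun t => c / (1 - c*t)) (Set.Icc (0:ℝ) 1) := by
    apply ContinuousOn.div continuousOn_const (by fun_prop)
    intro t ht; exact (hpos t ht.1).ne'
  have huIcc : Set.uIcc (0:ℝ) 1 = Set.Icc (0:ℝ) 1 := Set.uIcc_of_le zero_le_one
  have hgint : IntervalIntegrable (fun t => c / (1 - c*t)) volume 0 1 := by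
    apply ContinuousOn.intervalIntegrable; rwa [huIcc]
  have hg2int : IntervalIntegrable (fun t => (c / (1 - c*t))^2) volume 0 1 := by
    apply ContinuousOn.intervalIntegrable; rw [huIcc]; exact hcontg.pow 2
  -- primitive formula
  have hprim : ∀ z ∈ Set.Icc (0:ℝ) 1,
      (∫ t in (0:ℝ)..z, c / (1 - c*t)) = -Real.log (1 - c*z) := by
    intro z hz
    have hder : ∀ t ∈ Set.uIcc (0:ℝ) z, HasDerivAt (fun t => -Real.log (1 - c*t))
        (c / (1 - c*t)) t := by
      intro t ht
      rw [Set.uIcc_of_le hz.1] at ht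
      have htpos : (0:ℝ) < 1 - c*t := hpos t ht.1
      have h1 : HasDerivAt (fun t : ℝ => 1 - c*t) (-c) t := by
        exact ((hasDerivAt_const t (1:ℝ)).sub ((hasDerivAt_id t).const_mul c)).congr_deriv (by ring)
      have h2 := (h1.log htpos.ne').neg
      exact h2.congr_deriv (by ring)
    have hsub : IntervalIntegrable (fun t => c / (1 - c*t)) volume 0 z := by
      apply ContinuousOn.intervalIntegrable
      apply hcontg.mono
      rw [Set.uIcc_of_le hz.1]
      exact Set.Icc_subset_Icc le_rfl hz.2
    rw [intervalIntegral.integral_eq_sub_of_hasDerivAt hder hsub]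
    simp
  -- core integral
  have hI : (∫ z in (0:ℝ)..(1:ℝ), ((1 - c*z)⁻¹)^2) = (1 - c)⁻¹ := by
    have hder : ∀ z ∈ Set.uIcc (0:ℝ) 1, HasDerivAt (fun z => z * (1 - c*z)⁻¹)
        (((1 - c*z)⁻¹)^2) z := by
      intro z hz
      rw [huIcc] at hz
      have hzpos : (0:ℝ) < 1 - c*z := hpos z hz.1
      have h1 : HasDerivAt (fun z : ℝ => 1 - c*z) (-c) z := by
        exact ((hasDerivAt_const z (1:ℝ)).sub ((hasDerivAt_id z).const_mul c)).congr_deriv (by ring)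
      have h2 : HasDerivAt (fun z : ℝ => (1 - c*z)⁻¹) (-(-c) / (1 - c*z)^2) z :=
        h1.inv hzpos.ne'
      have h3 := (hasDerivAt_id z).mul h2
      have hne := hzpos.ne'
      exact h3.congr_deriv (by simp only [id]; field_simp; ring)
    have hint : IntervalIntegrable (fun z => ((1 - c*z)⁻¹)^2) volume 0 1 := by
      apply ContinuousOn.intervalIntegrable
      rw [huIcc]
      apply ContinuousOn.pow
      apply ContinuousOn.inv₀ (by fun_prop)
      intro t ht; exact (hpos t ht.1).ne'
    rw [intervalIntegral.integral_eq_sub_of_hasDerivAt hder hint]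
    simp
  refine ⟨hgint, hg2int, ?_, ?_, ?_⟩
  · have hcongr : Set.EqOn (fun z => Real.exp (2 * ∫ t in (0:ℝ)..z, c / (1 - c*t)))
        (fun z => ((1 - c*z)⁻¹)^2) (Set.uIcc (0:ℝ) 1) := by
      intro z hz
      rw [huIcc] at hz
      have hzpos : (0:ℝ) < 1 - c*z := hpos z hz.1
      simp only
      rw [hprim z hz]
      rw [show (2 : ℝ) * -Real.log (1 - c*z) = (-Real.log (1 - c*z)) + (-Real.log (1 - c*z)) by ring,
        Real.exp_add, Real.exp_neg, Real.exp_log hzpos]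
      ring
    rw [intervalIntegral.integral_congr hcongr]
    exact hI
  · rw [hprim 1 (by norm_num)]
    rw [Real.exp_neg, Real.exp_log (by simpa using hpos 1 zero_le_one)]
    norm_num
  · have hcongr : Set.EqOn (fun z => (c / (1 - c*z))^2)
        (fun z => c^2 * ((1 - c*z)⁻¹)^2) (Set.uIcc (0:ℝ) 1) := by
      intro z hz
      simp only [div_eq_mul_inv, mul_pow]
    rw [intervalIntegral.integral_congr hcongr, intervalIntegral.integral_const_mul, hI]



/-- The variational rate function `I(u,v)`: infimum of `4∫₀¹ f'(z)² dz` over absolutely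
continuous `f : [0,1] → ℝ` (written as `f(z) = ∫₀ᶻ g`) with square-integrable derivative `g`,
`f(0) = 0`, `∫₀¹ e^{2 f(z)} dz = u` and `e^{f(1)} = v`. -/
noncomputable def ratefun (u v : ℝ) : ℝ :=
  sInf {r : ℝ | ∃ g : ℝ → ℝ,
    IntervalIntegrable g volume 0 1 ∧
    IntervalIntegrable (fun z => (g z) ^ 2) volume 0 1 ∧
    (∫ z in (0:ℝ)..(1:ℝ), Real.exp (2 * ∫ t in (0:ℝ)..z, g t)) = u ∧
    Real.exp (∫ t in (0:ℝ)..(1:ℝ), g t) = v ∧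
    r = 4 * ∫ z in (0:ℝ)..(1:ℝ), (g z) ^ 2}


/-- For `ϱ ∈ [−1,0]` and `a > 0`,
`inf_{u,v>0} { (1/2) I(u,v) + a ϱ² u − 2ϱ√(2a)(v−1) } = 0`, and the infimum is attained at
some `(u_m, v_m) ∈ (0,∞)²`. -/
theorem ratefun_martingale_inf (ϱ a : ℝ) (hϱ : ϱ ∈ Set.Icc (-1 : ℝ) 0) (ha : 0 < a) :
    sInf {r : ℝ | ∃ u v : ℝ, 0 < u ∧ 0 < v ∧
        r = (1 / 2) * ratefun u v + a * ϱ ^ 2 * u - 2 * ϱ * Real.sqrt (2 * a) * (v - 1)} = 0 ∧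
    ∃ um vm : ℝ, 0 < um ∧ 0 < vm ∧
      (1 / 2) * ratefun um vm + a * ϱ ^ 2 * um - 2 * ϱ * Real.sqrt (2 * a) * (vm - 1) = 0 := by
  obtain ⟨hϱ1, hϱ0⟩ := hϱ
  have hs0 : 0 ≤ Real.sqrt (2*a) := Real.sqrt_nonneg _
  have hs2 : (Real.sqrt (2*a))^2 = 2*a := Real.sq_sqrt (by linarith)
  set c : ℝ := ϱ * Real.sqrt (2*a) / 2 with hcdef
  have hc : c ≤ 0 := by
    apply div_nonpos_of_nonpos_of_nonneg _ (by norm_num)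
    exact mul_nonpos_of_nonpos_of_nonneg hϱ0 hs0
  have hca : 2*c^2 = a*ϱ^2 := by
    have h1 : c^2 = ϱ^2 * (Real.sqrt (2*a))^2 / 4 := by rw [hcdef]; ring
    rw [hs2] at h1
    linear_combination 2*h1
  have hc4 : 4*c = 2*ϱ*Real.sqrt (2*a) := by rw [hcdef]; ring
  have hk : (0:ℝ) < 1 - c := by linarith
  -- elementwise facts about the ratefun sets
  have hnonneg_elem : ∀ u v r : ℝ, (∃ g : ℝ → ℝ,
      IntervalIntegrable g volume 0 1 ∧
      IntervalIntegrable (fun z => (g z) ^ 2) volume 0 1 ∧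
      (∫ z in (0:ℝ)..(1:ℝ), Real.exp (2 * ∫ t in (0:ℝ)..z, g t)) = u ∧
      Real.exp (∫ t in (0:ℝ)..(1:ℝ), g t) = v ∧
      r = 4 * ∫ z in (0:ℝ)..(1:ℝ), (g z) ^ 2) → 0 ≤ r := by
    rintro u v r ⟨g, -, -, -, -, hr⟩
    have : 0 ≤ ∫ z in (0:ℝ)..(1:ℝ), (g z)^2 :=
      intervalIntegral.integral_nonneg zero_le_one (fun z _ => sq_nonneg _)
    rw [hr]; linarith
  have hlb_elem : ∀ u v r : ℝ, (∃ g : ℝ → ℝ,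
      IntervalIntegrable g volume 0 1 ∧
      IntervalIntegrable (fun z => (g z) ^ 2) volume 0 1 ∧
      (∫ z in (0:ℝ)..(1:ℝ), Real.exp (2 * ∫ t in (0:ℝ)..z, g t)) = u ∧
      Real.exp (∫ t in (0:ℝ)..(1:ℝ), g t) = v ∧
      r = 4 * ∫ z in (0:ℝ)..(1:ℝ), (g z) ^ 2) →
      8*c*(v-1) - 4*c^2*u ≤ r := by
    rintro u v r ⟨g, hg1, hg2, hgu, hgv, hgr⟩
    have := aux_LB c hg1 hg2
    rw [hgu, hgv] at this
    rw [hgr]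
    linarith
  have hbdd : ∀ u v : ℝ, BddBelow {r : ℝ | ∃ g : ℝ → ℝ,
      IntervalIntegrable g volume 0 1 ∧
      IntervalIntegrable (fun z => (g z) ^ 2) volume 0 1 ∧
      (∫ z in (0:ℝ)..(1:ℝ), Real.exp (2 * ∫ t in (0:ℝ)..z, g t)) = u ∧
      Real.exp (∫ t in (0:ℝ)..(1:ℝ), g t) = v ∧
      r = 4 * ∫ z in (0:ℝ)..(1:ℝ), (g z) ^ 2} :=
    fun u v => ⟨0, fun r hr => hnonneg_elem u v r hr⟩
  have hne : ∀ u v : ℝ, 0 < u → 0 < v → Set.Nonempty {r : ℝ | ∃ g : ℝ → ℝ,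
      IntervalIntegrable g volume 0 1 ∧
      IntervalIntegrable (fun z => (g z) ^ 2) volume 0 1 ∧
      (∫ z in (0:ℝ)..(1:ℝ), Real.exp (2 * ∫ t in (0:ℝ)..z, g t)) = u ∧
      Real.exp (∫ t in (0:ℝ)..(1:ℝ), g t) = v ∧
      r = 4 * ∫ z in (0:ℝ)..(1:ℝ), (g z) ^ 2} := by
    intro u v hu hv
    obtain ⟨g, h1, h2, h3, h4⟩ := aux_NE u v hu hv
    exact ⟨4 * ∫ z in (0:ℝ)..(1:ℝ), (g z)^2, g, h1, h2, h3, h4, rfl⟩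
  have hrge : ∀ u v : ℝ, 0 < u → 0 < v → 8*c*(v-1) - 4*c^2*u ≤ ratefun u v := by
    intro u v hu hv
    rw [ratefun]
    exact le_csInf (hne u v hu hv) (fun r hr => hlb_elem u v r hr)
  have hobj : ∀ u v : ℝ, 0 < u → 0 < v →
      0 ≤ 1/2 * ratefun u v + a*ϱ^2*u - 2*ϱ*Real.sqrt (2*a)*(v-1) := by
    intro u v hu hv
    have h1 := hrge u v hu hv
    rw [← hca, ← hc4]
    linarith
  -- the minimizer
  obtain ⟨hg0int, hg02int, hg0u, hg0v, hg0sq⟩ := aux_min hc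
  have hum : (0:ℝ) < (1-c)⁻¹ := inv_pos.mpr hk
  have hid : (1-c)⁻¹ - 1 = c * (1-c)⁻¹ := by field_simp; ring
  have hmem : (4*(c^2*(1-c)⁻¹)) ∈ {r : ℝ | ∃ g : ℝ → ℝ,
      IntervalIntegrable g volume 0 1 ∧
      IntervalIntegrable (fun z => (g z) ^ 2) volume 0 1 ∧
      (∫ z in (0:ℝ)..(1:ℝ), Real.exp (2 * ∫ t in (0:ℝ)..z, g t)) = (1-c)⁻¹ ∧
      Real.exp (∫ t in (0:ℝ)..(1:ℝ), g t) = (1-c)⁻¹ ∧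
      (4*(c^2*(1-c)⁻¹)) = 4 * ∫ z in (0:ℝ)..(1:ℝ), (g z) ^ 2} := by
    refine ⟨fun t => c / (1 - c*t), hg0int, hg02int, hg0u, hg0v, ?_⟩
    rw [hg0sq]
  have hle : ratefun (1-c)⁻¹ (1-c)⁻¹ ≤ 4*(c^2*(1-c)⁻¹) := by
    rw [ratefun]
    exact csInf_le (hbdd _ _) hmem
  have hval : ratefun (1-c)⁻¹ (1-c)⁻¹ = 4*(c^2*(1-c)⁻¹) := by
    have h1 := hrge (1-c)⁻¹ (1-c)⁻¹ hum hum
    rw [hid] at h1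
    apply le_antisymm hle
    calc (4:ℝ)*(c^2*(1-c)⁻¹) = 8*c*(c*(1-c)⁻¹) - 4*c^2*(1-c)⁻¹ := by ring
      _ ≤ ratefun (1-c)⁻¹ (1-c)⁻¹ := h1
  have hzero : 1/2 * ratefun (1-c)⁻¹ (1-c)⁻¹ + a*ϱ^2*(1-c)⁻¹
      - 2*ϱ*Real.sqrt (2*a)*((1-c)⁻¹ - 1) = 0 := by
    rw [hval, ← hca, ← hc4, hid]
    ring
  constructor
  · apply le_antisymm
    · apply csInf_le
      · exact ⟨0, by rintro r ⟨u, v, hu, hv, hr⟩; rw [hr]; exact hobj u v hu hv⟩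
      · exact ⟨(1-c)⁻¹, (1-c)⁻¹, hum, hum, hzero.symm⟩
    · refine le_csInf ⟨0, ?_⟩ ?_
      · exact ⟨(1-c)⁻¹, (1-c)⁻¹, hum, hum, hzero.symm⟩
      · rintro r ⟨u, v, hu, hv, hr⟩
        rw [hr]
        exact hobj u v hu hv
  · exact ⟨(1-c)⁻¹, (1-c)⁻¹, hum, hum, hzero⟩
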